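/- Consider the system of ODEs on the upper half space {(x,z) : x > 0, z ∈ ℂ} for φ = (φ₁,φ₂,φ₃,φ₄): ∂φ₁/∂x = -(3/(2x))φ₁, ∂φ₁/∂z = (3i/x)φ₂; ∂φ₂/∂x = -(1/(2x))φ₂, ∂φ₂/∂z = (4i/x)φ₃; ∂φ₃/∂x = (1/(2x))φ₃, ∂φ₃/∂z = (3i/x)φ₄; ∂φ₄/∂x = (3/(2x))φ₄, ∂φ₄/∂z = 0, with all φᵢ holomorphic in z (∂φᵢ/∂z̄ = 0). Then the solution space is exactly 4-dimensional, spanned by (x^{-3/2},0,0,0), (3izx^{-3/2}, x^{-1/2}, 0, 0), (-6z²x^{-3/2}, 4izx^{-1/2}, x^{1/2}, 0), (-6iz³x^{-3/2}, -6z²x^{-1/2}, 3izx^{1/2}, x^{3/2}). -/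

import Mathlib

open Complex

lemma eq_at_one {f : ℝ → ℂ} (h : ∀ t ∈ Set.Ioi (0:ℝ), HasDerivAt f 0 t) {x : ℝ} (hx : 0 < x) :
    f x = f 1 := by
  apply (convex_Ioi (0:ℝ)).is_const_of_fderivWithin_eq_zero (𝕜 := ℝ)
    (fun t ht => (h t ht).differentiableAt.differentiableWithinAt)
    (fun t ht => ?_) hx (by norm_num)
  rw [fderivWithin_of_isOpen isOpen_Ioi ht, (h t ht).hasFDerivAt.fderiv]
  ext; simp

lemma rpowC_hasDerivAt (r : ℝ) {x : ℝ} (hx : 0 < x) :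
    HasDerivAt (fun t : ℝ => ((t ^ r : ℝ) : ℂ)) ((r : ℂ) * ((x ^ (r - 1) : ℝ) : ℂ)) x := by
  have h := (Real.hasDerivAt_rpow_const (x := x) (p := r) (Or.inl hx.ne')).ofReal_comp
  simpa using h

lemma rpow_div_cast {x : ℝ} (hx : 0 < x) (a : ℝ) :
    ((x ^ a : ℝ) : ℂ) / (x : ℂ) = ((x ^ (a - 1) : ℝ) : ℂ) := by
  rw [Real.rpow_sub hx, Real.rpow_one]; push_cast; ring

/-- solve the radial ODE f' = (r/x) f on (0,∞) -/
lemma radial {f : ℝ → ℂ} {r : ℝ}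
    (h : ∀ t ∈ Set.Ioi (0:ℝ), HasDerivAt f ((r : ℂ) / t * f t) t)
    {x : ℝ} (hx : 0 < x) : f x = f 1 * ((x ^ r : ℝ) : ℂ) := by
  have key : ∀ t ∈ Set.Ioi (0:ℝ),
      HasDerivAt (fun s : ℝ => f s * ((s ^ (-r) : ℝ) : ℂ)) 0 t := by
    intro t ht
    have ht' : (0:ℝ) < t := ht
    have hd := (h t ht).mul (rpowC_hasDerivAt (-r) ht')
    convert hd using 1
    · rfl
    · rfl
    have h1 : ((t ^ (-r) : ℝ) : ℂ) = ((t ^ (-r - 1) : ℝ) : ℂ) * (t : ℂ) := by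
      rw [← rpow_div_cast ht' (-r), div_mul_cancel₀]
      exact_mod_cast ht'.ne'
    have htne : (t : ℂ) ≠ 0 := by exact_mod_cast ht'.ne'
    rw [h1]
    push_cast
    field_simp
    ring
  have := eq_at_one key hx
  simp only [Real.one_rpow, ofReal_one, mul_one] at this
  have hprod : ((x ^ (-r) : ℝ) : ℂ) * ((x ^ r : ℝ) : ℂ) = 1 := by
    rw [← ofReal_mul, ← Real.rpow_add hx]
    norm_num
  calc f x = f x * ((x ^ (-r) : ℝ) : ℂ) * ((x ^ r : ℝ) : ℂ) := by
        rw [mul_assoc, hprod, mul_one]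
    _ = f 1 * ((x ^ r : ℝ) : ℂ) := by rw [this]

lemma cubic_hasDerivAt (a b c d : ℂ) (z : ℂ) :
    HasDerivAt (fun w : ℂ => a + b * w + c * w ^ 2 + d * w ^ 3)
      (b + 2 * c * z + 3 * d * z ^ 2) z := by
  have h1 : HasDerivAt (fun w : ℂ => a + b * w + c * w ^ 2 + d * w ^ 3)
      (0 + b * 1 + c * (2 * z ^ 1) + d * (3 * z ^ 2)) z :=
    (((hasDerivAt_const z a).add ((hasDerivAt_id z).const_mul b)).add
      ((hasDerivAt_pow 2 z).const_mul c)).add ((hasDerivAt_pow 3 z).const_mul d)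
  convert h1 using 1
  ring

lemma antideriv {g : ℂ → ℂ} {b c d : ℂ}
    (h : ∀ w : ℂ, HasDerivAt g (b + 2*c*w + 3*d*w^2) w) (z : ℂ) :
    g z = g 0 + b*z + c*z^2 + d*z^3 := by
  have key : ∀ w, HasDerivAt (fun v : ℂ => g v - (b*v + c*v^2 + d*v^3)) 0 w := by
    intro w
    have hp : HasDerivAt (fun v : ℂ => b*v + c*v^2 + d*v^3) (b + 2*c*w + 3*d*w^2) w := by
      have h0 : (fun v : ℂ => b*v + c*v^2 + d*v^3)
          = fun v : ℂ => (0:ℂ) + b*v + c*v^2 + d*v^3 := by ext v; ring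
      rw [h0]; exact cubic_hasDerivAt 0 b c d w
    exact ((h w).sub hp).congr_deriv (by ring)
  have hc := is_const_of_deriv_eq_zero (𝕜 := ℂ)
    (fun w => (key w).differentiableAt) (fun w => (key w).deriv) z 0
  simp only [mul_zero, ne_eq, OfNat.ofNat_ne_zero, not_false_eq_true, zero_pow, add_zero,
    sub_zero] at hc
  linear_combination hc

/-- The spin `3/2` Killing spinor system with `μ = i/2` on hyperbolic 3-space (upper
half-space model, coordinates `x > 0`, `z = x² + ix³ ∈ ℂ`, components holomorphic in
`z`): the solution space is exactly 4-dimensional, spanned by the four explicit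
solutions.  The system is
`∂φ₁/∂x = -(3/(2x))φ₁, ∂φ₁/∂z = (3i/x)φ₂; ∂φ₂/∂x = -(1/(2x))φ₂, ∂φ₂/∂z = (4i/x)φ₃;`
`∂φ₃/∂x = (1/(2x))φ₃, ∂φ₃/∂z = (3i/x)φ₄; ∂φ₄/∂x = (3/(2x))φ₄, ∂φ₄/∂z = 0`
(holomorphy in `z` is encoded by the complex differentiability in `z`). -/
theorem spin_three_halves_killing_on_H3 (φ₁ φ₂ φ₃ φ₄ : ℝ → ℂ → ℂ) :
    ((∀ x : ℝ, 0 < x → ∀ z : ℂ,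
        HasDerivAt (fun t : ℝ => φ₁ t z) (-(3 / (2 * (x : ℂ))) * φ₁ x z) x ∧
        HasDerivAt (fun w : ℂ => φ₁ x w) (3 * I / (x : ℂ) * φ₂ x z) z ∧
        HasDerivAt (fun t : ℝ => φ₂ t z) (-(1 / (2 * (x : ℂ))) * φ₂ x z) x ∧
        HasDerivAt (fun w : ℂ => φ₂ x w) (4 * I / (x : ℂ) * φ₃ x z) z ∧
        HasDerivAt (fun t : ℝ => φ₃ t z) ((1 / (2 * (x : ℂ))) * φ₃ x z) x ∧
        HasDerivAt (fun w : ℂ => φ₃ x w) (3 * I / (x : ℂ) * φ₄ x z) z ∧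
        HasDerivAt (fun t : ℝ => φ₄ t z) ((3 / (2 * (x : ℂ))) * φ₄ x z) x ∧
        HasDerivAt (fun w : ℂ => φ₄ x w) 0 z))
    ↔ (∃ C₁ C₂ C₃ C₄ : ℂ, ∀ x : ℝ, 0 < x → ∀ z : ℂ,
        φ₁ x z = (C₁ + 3 * I * C₂ * z - 6 * C₃ * z ^ 2 - 6 * I * C₄ * z ^ 3)
          * ((x ^ (-(3 / 2 : ℝ)) : ℝ) : ℂ) ∧
        φ₂ x z = (C₂ + 4 * I * C₃ * z - 6 * C₄ * z ^ 2)
          * ((x ^ (-(1 / 2 : ℝ)) : ℝ) : ℂ) ∧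
        φ₃ x z = (C₃ + 3 * I * C₄ * z) * ((x ^ ((1 / 2 : ℝ)) : ℝ) : ℂ) ∧
        φ₄ x z = C₄ * ((x ^ ((3 / 2 : ℝ)) : ℝ) : ℂ)) := by
  constructor
  · intro h
    refine ⟨φ₁ 1 0, φ₂ 1 0, φ₃ 1 0, φ₄ 1 0, ?_⟩
    set C₁ := φ₁ 1 0
    set C₂ := φ₂ 1 0
    set C₃ := φ₃ 1 0
    set C₄ := φ₄ 1 0
    -- step 4 : φ₄
    have h4 : ∀ x : ℝ, 0 < x → ∀ z : ℂ, φ₄ x z = C₄ * ((x ^ ((3 / 2 : ℝ)) : ℝ) : ℂ) := by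
      intro x hx z
      have hz : φ₄ 1 z = C₄ :=
        is_const_of_deriv_eq_zero (𝕜 := ℂ)
          (fun w => ((h 1 one_pos w).2.2.2.2.2.2.2).differentiableAt)
          (fun w => ((h 1 one_pos w).2.2.2.2.2.2.2).deriv) z 0
      have hr := radial (f := fun t => φ₄ t z) (r := (3/2 : ℝ)) (fun t ht => by
        have hd := (h t ht z).2.2.2.2.2.2.1
        convert hd using 1
        push_cast
        rw [div_mul_eq_div_div]) hx
      beta_reduce at hr
      rw [hr, hz]
    -- step 3 : φ₃
    have h3 : ∀ x : ℝ, 0 < x → ∀ z : ℂ,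
        φ₃ x z = (C₃ + 3 * I * C₄ * z) * ((x ^ ((1 / 2 : ℝ)) : ℝ) : ℂ) := by
      intro x hx z
      have hxne : (x : ℂ) ≠ 0 := by exact_mod_cast hx.ne'
      have E : ((x ^ ((3/2 : ℝ)) : ℝ) : ℂ) = ((x ^ ((1/2 : ℝ)) : ℝ) : ℂ) * x := by
        have := rpow_div_cast hx (3/2)
        rw [show (3/2 : ℝ) - 1 = 1/2 by norm_num] at this
        rw [← this, div_mul_cancel₀ _ hxne]
      have had := antideriv (g := fun w => φ₃ x w)
        (b := 3 * I * C₄ * ((x ^ ((1/2 : ℝ)) : ℝ) : ℂ)) (c := 0) (d := 0) (fun w => by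
          have hd := (h x hx w).2.2.2.2.2.1
          convert hd using 1
          rw [h4 x hx w, E]
          field_simp
          ring) z
      have h0 : φ₃ x 0 = C₃ * ((x ^ ((1/2 : ℝ)) : ℝ) : ℂ) :=
        radial (f := fun t => φ₃ t 0) (r := (1/2 : ℝ)) (fun t ht => by
          have hd := (h t ht 0).2.2.2.2.1
          convert hd using 1
          push_cast
          rw [div_mul_eq_div_div]) hx
      beta_reduce at had h0
      rw [had, h0]
      ring
    -- step 2 : φ₂
    have h2 : ∀ x : ℝ, 0 < x → ∀ z : ℂ,
        φ₂ x z = (C₂ + 4 * I * C₃ * z - 6 * C₄ * z ^ 2) * ((x ^ (-(1 / 2 : ℝ)) : ℝ) : ℂ) := by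
      intro x hx z
      have hxne : (x : ℂ) ≠ 0 := by exact_mod_cast hx.ne'
      have E : ((x ^ ((1/2 : ℝ)) : ℝ) : ℂ) = ((x ^ (-(1/2 : ℝ)) : ℝ) : ℂ) * x := by
        have := rpow_div_cast hx (1/2)
        rw [show (1/2 : ℝ) - 1 = -(1/2) by norm_num] at this
        rw [← this, div_mul_cancel₀ _ hxne]
      have had := antideriv (g := fun w => φ₂ x w)
        (b := 4 * I * C₃ * ((x ^ (-(1/2 : ℝ)) : ℝ) : ℂ))
        (c := -6 * C₄ * ((x ^ (-(1/2 : ℝ)) : ℝ) : ℂ)) (d := 0) (fun w => by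
          have hd := (h x hx w).2.2.2.1
          convert hd using 1
          rw [h3 x hx w, E]
          field_simp
          ring_nf
          simp only [I_sq]
          try ring) z
      have h0 : φ₂ x 0 = C₂ * ((x ^ (-(1/2 : ℝ)) : ℝ) : ℂ) :=
        radial (f := fun t => φ₂ t 0) (r := -(1/2 : ℝ)) (fun t ht => by
          have hd := (h t ht 0).2.2.1
          convert hd using 1
          push_cast
          rw [div_mul_eq_div_div]
          ring) hx
      beta_reduce at had h0
      rw [had, h0]
      ring
    -- step 1 : φ₁
    have h1 : ∀ x : ℝ, 0 < x → ∀ z : ℂ,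
        φ₁ x z = (C₁ + 3 * I * C₂ * z - 6 * C₃ * z ^ 2 - 6 * I * C₄ * z ^ 3)
          * ((x ^ (-(3 / 2 : ℝ)) : ℝ) : ℂ) := by
      intro x hx z
      have hxne : (x : ℂ) ≠ 0 := by exact_mod_cast hx.ne'
      have E : ((x ^ (-(1/2 : ℝ)) : ℝ) : ℂ) = ((x ^ (-(3/2 : ℝ)) : ℝ) : ℂ) * x := by
        have := rpow_div_cast hx (-(1/2))
        rw [show -(1/2 : ℝ) - 1 = -(3/2) by norm_num] at this
        rw [← this, div_mul_cancel₀ _ hxne]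
      have had := antideriv (g := fun w => φ₁ x w)
        (b := 3 * I * C₂ * ((x ^ (-(3/2 : ℝ)) : ℝ) : ℂ))
        (c := -6 * C₃ * ((x ^ (-(3/2 : ℝ)) : ℝ) : ℂ))
        (d := -6 * I * C₄ * ((x ^ (-(3/2 : ℝ)) : ℝ) : ℂ)) (fun w => by
          have hd := (h x hx w).2.1
          convert hd using 1
          rw [h2 x hx w, E]
          field_simp
          ring_nf
          simp only [I_sq]
          try ring) z
      have h0 : φ₁ x 0 = C₁ * ((x ^ (-(3/2 : ℝ)) : ℝ) : ℂ) :=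
        radial (f := fun t => φ₁ t 0) (r := -(3/2 : ℝ)) (fun t ht => by
          have hd := (h t ht 0).1
          convert hd using 1
          push_cast
          rw [div_mul_eq_div_div]
          ring) hx
      beta_reduce at had h0
      rw [had, h0]
      ring
    intro x hx z
    exact ⟨h1 x hx z, h2 x hx z, h3 x hx z, h4 x hx z⟩
  · rintro ⟨C₁, C₂, C₃, C₄, H⟩
    intro x hx z
    have hxne : (x : ℂ) ≠ 0 := by exact_mod_cast hx.ne'
    have hmem : Set.Ioi (0:ℝ) ∈ nhds x := isOpen_Ioi.mem_nhds hx
    -- rpow ladder facts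
    have E32 : ((x ^ ((3/2 : ℝ)) : ℝ) : ℂ) = ((x ^ ((1/2 : ℝ)) : ℝ) : ℂ) * x := by
      have := rpow_div_cast hx (3/2)
      rw [show (3/2 : ℝ) - 1 = 1/2 by norm_num] at this
      rw [← this, div_mul_cancel₀ _ hxne]
    have E12 : ((x ^ ((1/2 : ℝ)) : ℝ) : ℂ) = ((x ^ (-(1/2 : ℝ)) : ℝ) : ℂ) * x := by
      have := rpow_div_cast hx (1/2)
      rw [show (1/2 : ℝ) - 1 = -(1/2) by norm_num] at this
      rw [← this, div_mul_cancel₀ _ hxne]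
    have Em12 : ((x ^ (-(1/2 : ℝ)) : ℝ) : ℂ) = ((x ^ (-(3/2 : ℝ)) : ℝ) : ℂ) * x := by
      have := rpow_div_cast hx (-(1/2))
      rw [show -(1/2 : ℝ) - 1 = -(3/2) by norm_num] at this
      rw [← this, div_mul_cancel₀ _ hxne]
    -- x-derivatives
    have hx1 : HasDerivAt (fun t : ℝ => φ₁ t z) (-(3 / (2 * (x : ℂ))) * φ₁ x z) x := by
      have hev : (fun t : ℝ => φ₁ t z) =ᶠ[nhds x]
          (fun t : ℝ => (C₁ + 3 * I * C₂ * z - 6 * C₃ * z ^ 2 - 6 * I * C₄ * z ^ 3)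
            * ((t ^ (-(3/2 : ℝ)) : ℝ) : ℂ)) :=
        Filter.eventually_of_mem hmem (fun t ht => (H t ht z).1)
      have hm := ((rpowC_hasDerivAt (-(3/2)) hx).const_mul
        (C₁ + 3 * I * C₂ * z - 6 * C₃ * z ^ 2 - 6 * I * C₄ * z ^ 3))
      refine (hm.congr_of_eventuallyEq hev).congr_deriv ?_
      rw [(H x hx z).1, show (-(3/2 : ℝ)) - 1 = -(3/2) - 1 from rfl,
        ← rpow_div_cast hx (-(3/2))]
      field_simp
      push_cast
      try simp only [I_sq]
      try ring
    have hx2 : HasDerivAt (fun t : ℝ => φ₂ t z) (-(1 / (2 * (x : ℂ))) * φ₂ x z) x := by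
      have hev : (fun t : ℝ => φ₂ t z) =ᶠ[nhds x]
          (fun t : ℝ => (C₂ + 4 * I * C₃ * z - 6 * C₄ * z ^ 2)
            * ((t ^ (-(1/2 : ℝ)) : ℝ) : ℂ)) :=
        Filter.eventually_of_mem hmem (fun t ht => (H t ht z).2.1)
      have hm := ((rpowC_hasDerivAt (-(1/2)) hx).const_mul
        (C₂ + 4 * I * C₃ * z - 6 * C₄ * z ^ 2))
      refine (hm.congr_of_eventuallyEq hev).congr_deriv ?_
      rw [(H x hx z).2.1, ← rpow_div_cast hx (-(1/2))]
      field_simp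
      push_cast
      try simp only [I_sq]
      try ring
    have hx3 : HasDerivAt (fun t : ℝ => φ₃ t z) ((1 / (2 * (x : ℂ))) * φ₃ x z) x := by
      have hev : (fun t : ℝ => φ₃ t z) =ᶠ[nhds x]
          (fun t : ℝ => (C₃ + 3 * I * C₄ * z) * ((t ^ ((1/2 : ℝ)) : ℝ) : ℂ)) :=
        Filter.eventually_of_mem hmem (fun t ht => (H t ht z).2.2.1)
      have hm := ((rpowC_hasDerivAt ((1/2)) hx).const_mul (C₃ + 3 * I * C₄ * z))
      refine (hm.congr_of_eventuallyEq hev).congr_deriv ?_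
      rw [(H x hx z).2.2.1, ← rpow_div_cast hx ((1/2))]
      field_simp
      push_cast
      try simp only [I_sq]
      try ring
    have hx4 : HasDerivAt (fun t : ℝ => φ₄ t z) ((3 / (2 * (x : ℂ))) * φ₄ x z) x := by
      have hev : (fun t : ℝ => φ₄ t z) =ᶠ[nhds x]
          (fun t : ℝ => C₄ * ((t ^ ((3/2 : ℝ)) : ℝ) : ℂ)) :=
        Filter.eventually_of_mem hmem (fun t ht => (H t ht z).2.2.2)
      have hm := ((rpowC_hasDerivAt ((3/2)) hx).const_mul C₄)
      refine (hm.congr_of_eventuallyEq hev).congr_deriv ?_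
      rw [(H x hx z).2.2.2, ← rpow_div_cast hx ((3/2))]
      field_simp
      push_cast
      try simp only [I_sq]
      try ring
    -- z-derivatives
    have hfun1 : (fun w : ℂ => φ₁ x w)
        = fun w : ℂ => (C₁ + 3 * I * C₂ * w - 6 * C₃ * w ^ 2 - 6 * I * C₄ * w ^ 3)
          * ((x ^ (-(3/2 : ℝ)) : ℝ) : ℂ) := funext fun w => (H x hx w).1
    have hfun2 : (fun w : ℂ => φ₂ x w)
        = fun w : ℂ => (C₂ + 4 * I * C₃ * w - 6 * C₄ * w ^ 2)
          * ((x ^ (-(1/2 : ℝ)) : ℝ) : ℂ) := funext fun w => (H x hx w).2.1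
    have hfun3 : (fun w : ℂ => φ₃ x w)
        = fun w : ℂ => (C₃ + 3 * I * C₄ * w) * ((x ^ ((1/2 : ℝ)) : ℝ) : ℂ) :=
      funext fun w => (H x hx w).2.2.1
    have hfun4 : (fun w : ℂ => φ₄ x w)
        = fun w : ℂ => C₄ * ((x ^ ((3/2 : ℝ)) : ℝ) : ℂ) := funext fun w => (H x hx w).2.2.2
    have hz1 : HasDerivAt (fun w : ℂ => φ₁ x w) (3 * I / (x : ℂ) * φ₂ x z) z := by
      rw [hfun1]
      have hshape : (fun w : ℂ => (C₁ + 3 * I * C₂ * w - 6 * C₃ * w ^ 2 - 6 * I * C₄ * w ^ 3)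
            * ((x ^ (-(3/2 : ℝ)) : ℝ) : ℂ))
          = fun w : ℂ => (C₁ + (3 * I * C₂) * w + (-6 * C₃) * w ^ 2 + (-6 * I * C₄) * w ^ 3)
            * ((x ^ (-(3/2 : ℝ)) : ℝ) : ℂ) := by ext w; ring
      rw [hshape]
      refine ((cubic_hasDerivAt C₁ (3 * I * C₂) (-6 * C₃) (-6 * I * C₄) z).mul_const
        _).congr_deriv ?_
      rw [(H x hx z).2.1, Em12]
      field_simp
      ring_nf
      simp only [I_sq]
      try ring
    have hz2 : HasDerivAt (fun w : ℂ => φ₂ x w) (4 * I / (x : ℂ) * φ₃ x z) z := by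
      rw [hfun2]
      have hshape : (fun w : ℂ => (C₂ + 4 * I * C₃ * w - 6 * C₄ * w ^ 2)
            * ((x ^ (-(1/2 : ℝ)) : ℝ) : ℂ))
          = fun w : ℂ => (C₂ + (4 * I * C₃) * w + (-6 * C₄) * w ^ 2 + 0 * w ^ 3)
            * ((x ^ (-(1/2 : ℝ)) : ℝ) : ℂ) := by ext w; ring
      rw [hshape]
      refine ((cubic_hasDerivAt C₂ (4 * I * C₃) (-6 * C₄) 0 z).mul_const _).congr_deriv ?_
      rw [(H x hx z).2.2.1, E12]
      field_simp
      ring_nf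
      simp only [I_sq]
      try ring
    have hz3 : HasDerivAt (fun w : ℂ => φ₃ x w) (3 * I / (x : ℂ) * φ₄ x z) z := by
      rw [hfun3]
      have hshape : (fun w : ℂ => (C₃ + 3 * I * C₄ * w) * ((x ^ ((1/2 : ℝ)) : ℝ) : ℂ))
          = fun w : ℂ => (C₃ + (3 * I * C₄) * w + 0 * w ^ 2 + 0 * w ^ 3)
            * ((x ^ ((1/2 : ℝ)) : ℝ) : ℂ) := by ext w; ring
      rw [hshape]
      refine ((cubic_hasDerivAt C₃ (3 * I * C₄) 0 0 z).mul_const _).congr_deriv ?_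
      rw [(H x hx z).2.2.2, E32]
      field_simp
      try simp only [I_sq]
      try ring
    have hz4 : HasDerivAt (fun w : ℂ => φ₄ x w) 0 z := by
      rw [hfun4]
      exact hasDerivAt_const z _
    exact ⟨hx1, hz1, hx2, hz2, hx3, hz3, hx4, hz4⟩
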